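/- For Ω ⊆ ℝ³ non-empty open, let curl be the maximal curl and Φ, E ∈ D(curl) with ι ι* the orthogonal projector of D(curl) (graph inner product) onto N(1 + curl curl). Then ⟨curl Φ | E⟩_{L²} - ⟨Φ | curl E⟩_{L²} = ⟨curl (ιι*Φ) | ιι*E⟩_{L²} - ⟨ιι*Φ | curl (ιι*E)⟩_{L²}; i.e., the 'integration by parts boundary term' depends only on the boundary-data projections ι*Φ and ι*E. -/

import Mathlib

open LinearPMap

/-- For the maximal operator `curl` (adjoint of the minimal `curl₀`, whose
domain is `D₀`), the integration-by-parts boundary term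
`⟨curl Φ | E⟩ - ⟨Φ | curl E⟩` depends only on the projections of `Φ`, `E` onto the
boundary data space `N(1 + curl curl)`: if `π` is the orthogonal projector of `D(curl)`
(graph inner product) onto `N(1 + curl curl)` (so that `Φ - π Φ ∈ D(curl₀)` for all `Φ`,
and `⟨curl φ | ψ⟩ = ⟨φ | curl ψ⟩` whenever `φ ∈ D(curl₀)` or `ψ ∈ D(curl₀)`), then
`⟨curl Φ | E⟩ - ⟨Φ | curl E⟩ = ⟨curl (π Φ) | π E⟩ - ⟨π Φ | curl (π E)⟩`. -/
theorem stmt13 {H : Type*} [NormedAddCommGroup H] [InnerProductSpace ℂ H] [CompleteSpace H]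
    (curl : H →ₗ.[ℂ] H)
    (D₀ : Submodule ℂ H) (hD₀ : D₀ ≤ curl.domain)   -- D₀ = D(curl₀)
    (hsym : ∀ φ ψ : curl.domain, ((φ : H) ∈ D₀ ∨ (ψ : H) ∈ D₀) →
      (inner ℂ (curl φ) ((ψ : H)) : ℂ) = inner ℂ ((φ : H)) (curl ψ))
    (π : curl.domain →ₗ[ℂ] curl.domain)
    (hπ : ∀ Φ : curl.domain, ((Φ - π Φ : curl.domain) : H) ∈ D₀)
    (Φ E : curl.domain) :
    (inner ℂ (curl Φ) ((E : H)) : ℂ) - inner ℂ ((Φ : H)) (curl E)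
      = (inner ℂ (curl (π Φ)) (((π E : curl.domain) : H)) : ℂ)
        - inner ℂ (((π Φ : curl.domain) : H)) (curl (π E)) := by
  set r : curl.domain := Φ - π Φ with hr
  set s : curl.domain := E - π E with hs
  have hΦ : Φ = π Φ + r := by rw [hr]; abel
  have hE : E = π E + s := by rw [hs]; abel
  have hrD : ((r : curl.domain) : H) ∈ D₀ := hπ Φ
  have hsD : ((s : curl.domain) : H) ∈ D₀ := hπ E
  have h1 : (inner ℂ (curl r) (((π E : curl.domain) : H)) : ℂ)
      = inner ℂ ((r : H)) (curl (π E)) := hsym _ _ (Or.inl hrD)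
  have h2 : (inner ℂ (curl (π Φ)) ((s : H)) : ℂ)
      = inner ℂ (((π Φ : curl.domain) : H)) (curl s) := hsym _ _ (Or.inr hsD)
  have h3 : (inner ℂ (curl r) ((s : H)) : ℂ)
      = inner ℂ ((r : H)) (curl s) := hsym _ _ (Or.inl hrD)
  calc (inner ℂ (curl Φ) ((E : H)) : ℂ) - inner ℂ ((Φ : H)) (curl E)
      = inner ℂ (curl (π Φ + r)) (((π E + s : curl.domain) : H))
        - inner ℂ (((π Φ + r : curl.domain) : H)) (curl (π E + s)) := by
        rw [← hΦ, ← hE]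
    _ = (inner ℂ (curl (π Φ)) (((π E : curl.domain) : H)) : ℂ)
        - inner ℂ (((π Φ : curl.domain) : H)) (curl (π E)) := by
        simp only [LinearPMap.map_add, Submodule.coe_add, inner_add_left, inner_add_right]
        rw [h1, h2, h3]
        ring
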